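/- Let 2 ≤ k ≤ n. There exists a constant θ > 0 depending only on n and k such that for every α > 0, every λ ∈ Γ̃_k with λ₁ ≥ λ₂ ≥ ⋯ ≥ λ_n, and every index 1 ≤ j ≤ k−1 (for which λ_j > 0): S_k^{jj}(λ) ≥ θ · S_k(λ)/λ_j. -/

import Mathlib

open scoped BigOperators

noncomputable section

/-- The `j`-th elementary symmetric function of the entries of `lam` indexed by `T`
(`j : ℤ`, with value `0` for `j < 0`). -/
def sigmaOn {n : ℕ} (T : Finset (Fin n)) (j : ℤ) (lam : Fin n → ℝ) : ℝ :=
  if 0 ≤ j then ∑ s ∈ T.powersetCard j.toNat, ∏ i ∈ s, lam i else 0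

/-- The `j`-th elementary symmetric polynomial `σ_j(λ)`. -/
def esymmR {n : ℕ} (j : ℤ) (lam : Fin n → ℝ) : ℝ := sigmaOn Finset.univ j lam

/-- The Garding cone `Γ_k`. -/
def GammaCone (n k : ℕ) : Set (Fin n → ℝ) :=
  {lam | ∀ i : ℕ, 1 ≤ i → i ≤ k → 0 < esymmR (i : ℤ) lam}

/-- `S_j(λ) = σ_j(λ) + α σ_{j-1}(λ)`. -/
def Sfun {n : ℕ} (α : ℝ) (j : ℤ) (lam : Fin n → ℝ) : ℝ :=
  esymmR j lam + α * esymmR (j - 1) lam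

/-- The cone `Γ̃_k = Γ_{k-1} ∩ {λ : S_k(λ) > 0}`. -/
def GammaTilde (n k : ℕ) (α : ℝ) : Set (Fin n → ℝ) :=
  GammaCone n (k - 1) ∩ {lam | 0 < Sfun α (k : ℤ) lam}

/-- `S_k^{pp}(λ) = σ_{k-1}(λ|p) + α σ_{k-2}(λ|p)`, where `(λ|p)` deletes the
`p`-th entry of `λ`. -/
def SD {n : ℕ} (α : ℝ) (k : ℤ) (lam : Fin n → ℝ) (p : Fin n) : ℝ :=
  sigmaOn (Finset.univ.erase p) (k - 1) lam + α * sigmaOn (Finset.univ.erase p) (k - 2) lam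

/-- `S_k^{pp,qq}(λ) = σ_{k-2}(λ|pq) + α σ_{k-3}(λ|pq)` for `p ≠ q`, where `(λ|pq)`
deletes the `p`-th and `q`-th entries of `λ`. -/
def SDD {n : ℕ} (α : ℝ) (k : ℤ) (lam : Fin n → ℝ) (p q : Fin n) : ℝ :=
  sigmaOn ((Finset.univ.erase p).erase q) (k - 2) lam
    + α * sigmaOn ((Finset.univ.erase p).erase q) (k - 3) lam


section SkDAuxSection
open Finset
set_option linter.unusedSectionVars false

namespace SkDAux
variable {ι : Type*} [DecidableEq ι]

def E (T : Finset ι) (j : ℕ) (x : ι → ℝ) : ℝ := ∑ s ∈ T.powersetCard j, ∏ i ∈ s, x i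

@[simp] lemma E_zero (T : Finset ι) (x : ι → ℝ) : E T 0 x = 1 := by simp [E]

lemma E_eq_zero_of_card_lt {T : Finset ι} {j : ℕ} (h : T.card < j) (x : ι → ℝ) :
    E T j x = 0 := by
  have : T.powersetCard j = ∅ := by
    rw [← Finset.not_nonempty_iff_eq_empty, Finset.powersetCard_nonempty]; omega
  simp [E, this]

lemma E_one (T : Finset ι) (j : ℕ) : E T j (fun _ => (1:ℝ)) = (T.card.choose j : ℝ) := by
  simp [E, Finset.card_powersetCard]

lemma E_one' (T : Finset ι) (j : ℕ) (x : ι → ℝ) (hx : ∀ i, x i = 1) :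
    E T j x = (T.card.choose j : ℝ) := by
  have : x = fun _ => (1:ℝ) := funext hx
  rw [this, E_one]

lemma E_single (T : Finset ι) (x : ι → ℝ) : E T 1 x = ∑ i ∈ T, x i := by
  rw [E, Finset.powersetCard_one, Finset.sum_map]
  simp

lemma E_map {κ : Type*} [DecidableEq κ] (f : ι ↪ κ) (T : Finset ι) (j : ℕ) (x : κ → ℝ) :
    E (T.map f) j x = E T j (x ∘ f) := by
  rw [E, Finset.powersetCard_map, Finset.sum_map]
  refine Finset.sum_congr rfl fun s hs => ?_
  have h : (Finset.mapEmbedding f).toEmbedding s = s.map f := rfl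
  rw [h, Finset.prod_map]
  rfl

lemma E_erase_succ {T : Finset ι} {p : ι} (hp : p ∈ T) (j : ℕ) (x : ι → ℝ) :
    E T (j+1) x = E (T.erase p) (j+1) x + x p * E (T.erase p) j x := by
  have h1 : T = insert p (T.erase p) := (Finset.insert_erase hp).symm
  rw [E]
  rw [show T.powersetCard (j+1) = (insert p (T.erase p)).powersetCard (j+1) by rw [← h1]]
  rw [Finset.powersetCard_succ_insert (Finset.notMem_erase p T)]
  rw [Finset.sum_union]
  · congr 1
    rw [Finset.sum_image]
    · rw [E, Finset.mul_sum]
      refine Finset.sum_congr rfl fun s hs => ?_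
      have hps : p ∉ s := fun hmem =>
        (Finset.notMem_erase p T) ((Finset.mem_powersetCard.1 hs).1 hmem)
      rw [Finset.prod_insert hps]
    · intro s hs t ht hst
      have hps : p ∉ s := fun hmem =>
        (Finset.notMem_erase p T) ((Finset.mem_powersetCard.1 hs).1 hmem)
      have hpt : p ∉ t := fun hmem =>
        (Finset.notMem_erase p T) ((Finset.mem_powersetCard.1 ht).1 hmem)
      have := congrArg (Finset.erase · p) hst
      simpa [Finset.erase_insert, hps, hpt] using this
  · rw [Finset.disjoint_left]
    intro S hS hS'
    obtain ⟨t, ht, rfl⟩ := Finset.mem_image.1 hS'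
    exact (Finset.notMem_erase p T) ((Finset.mem_powersetCard.1 hS).1 (Finset.mem_insert_self p t))


lemma sum_mul_E_erase (T : Finset ι) (j : ℕ) (x : ι → ℝ) :
    ∑ q ∈ T, x q * E (T.erase q) j x = (j+1 : ℝ) * E T (j+1) x := by
  have rhs : (j+1 : ℝ) * E T (j+1) x
      = ∑ S ∈ T.powersetCard (j+1), ∑ q ∈ S, x q * ∏ i ∈ S.erase q, x i := by
    rw [E, Finset.mul_sum]
    refine Finset.sum_congr rfl fun S hS => ?_
    have hcard : S.card = j + 1 := (Finset.mem_powersetCard.1 hS).2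
    have : ∀ q ∈ S, x q * ∏ i ∈ S.erase q, x i = ∏ i ∈ S, x i := fun q hq =>
      Finset.mul_prod_erase S x hq
    rw [Finset.sum_congr rfl this, Finset.sum_const, hcard]
    push_cast
    ring
  calc ∑ q ∈ T, x q * E (T.erase q) j x
      = ∑ q ∈ T, ∑ s ∈ (T.erase q).powersetCard j, x q * ∏ i ∈ s, x i := by
        refine Finset.sum_congr rfl fun q hq => ?_; rw [E, Finset.mul_sum]
    _ = ∑ z ∈ T.sigma (fun q => (T.erase q).powersetCard j), x z.1 * ∏ i ∈ z.2, x i :=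
        Finset.sum_sigma' _ _ _
    _ = ∑ z ∈ (T.powersetCard (j+1)).sigma (fun S => (S : Finset ι)),
          x z.2 * ∏ i ∈ z.1.erase z.2, x i := ?_
    _ = ∑ S ∈ T.powersetCard (j+1), ∑ q ∈ S, x q * ∏ i ∈ S.erase q, x i :=
        (Finset.sum_sigma' (T.powersetCard (j+1)) (fun S => (S : Finset ι)) (fun S q => x q * ∏ i ∈ S.erase q, x i)).symm
    _ = (j+1 : ℝ) * E T (j+1) x := rhs.symm
  refine Finset.sum_bij' (fun z hz => ⟨insert z.1 z.2, z.1⟩)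
    (fun z hz => ⟨z.2, z.1.erase z.2⟩) ?_ ?_ ?_ ?_ ?_
  · rintro ⟨q, s⟩ hz
    rw [Finset.mem_sigma] at hz ⊢
    obtain ⟨hq, hs⟩ := hz
    rw [Finset.mem_powersetCard] at hs
    have hqs : q ∉ s := fun h => Finset.notMem_erase q T (hs.1 h)
    refine ⟨Finset.mem_powersetCard.2 ⟨?_, ?_⟩, Finset.mem_insert_self _ _⟩
    · exact Finset.insert_subset hq ((hs.1).trans (Finset.erase_subset _ _))
    · rw [Finset.card_insert_of_notMem hqs, hs.2]
  · rintro ⟨S, q⟩ hz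
    rw [Finset.mem_sigma] at hz ⊢
    obtain ⟨hS, hq⟩ := hz
    rw [Finset.mem_powersetCard] at hS
    refine ⟨hS.1 hq, Finset.mem_powersetCard.2 ⟨?_, ?_⟩⟩
    · exact Finset.erase_subset_erase q hS.1
    · rw [Finset.card_erase_of_mem hq, hS.2]; omega
  · rintro ⟨q, s⟩ hz
    rw [Finset.mem_sigma] at hz
    obtain ⟨hq, hs⟩ := hz
    have hqs : q ∉ s := fun h =>
      Finset.notMem_erase q T ((Finset.mem_powersetCard.1 hs).1 h)
    simp [Finset.erase_insert hqs]
  · rintro ⟨S, q⟩ hz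
    rw [Finset.mem_sigma] at hz
    simp [Finset.insert_erase hz.2]
  · rintro ⟨q, s⟩ hz
    rw [Finset.mem_sigma] at hz
    obtain ⟨hq, hs⟩ := hz
    have hqs : q ∉ s := fun h =>
      Finset.notMem_erase q T ((Finset.mem_powersetCard.1 hs).1 h)
    simp [Finset.erase_insert hqs]


lemma filter_superset_empty {T R : Finset ι} {j : ℕ} (hj : j < R.card) :
    ((T.powersetCard j).filter fun S => R ⊆ S) = ∅ := by
  rw [Finset.eq_empty_iff_forall_notMem]
  intro S hS
  rw [Finset.mem_filter, Finset.mem_powersetCard] at hS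
  have := Finset.card_le_card hS.2
  omega

lemma card_filter_superset {T R : Finset ι} (hR : R ⊆ T) {j : ℕ} (hj : R.card ≤ j) :
    ((T.powersetCard j).filter fun S => R ⊆ S).card
      = (T.card - R.card).choose (j - R.card) := by
  rw [← Finset.card_sdiff_of_subset hR, ← Finset.card_powersetCard (j - R.card) (T \ R)]
  apply Finset.card_bij' (fun S _ => S \ R) (fun S' _ => S' ∪ R)
  · intro S hS
    rw [Finset.mem_filter, Finset.mem_powersetCard] at hS
    rw [Finset.mem_powersetCard]
    exact ⟨Finset.sdiff_subset_sdiff hS.1.1 (le_refl _),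
      by rw [Finset.card_sdiff_of_subset hS.2, hS.1.2]⟩
  · intro S' hS'
    rw [Finset.mem_powersetCard] at hS'
    have hd : Disjoint S' R := Finset.disjoint_of_subset_left hS'.1 (Finset.sdiff_disjoint)
    rw [Finset.mem_filter, Finset.mem_powersetCard]
    refine ⟨⟨Finset.union_subset (hS'.1.trans (Finset.sdiff_subset)) hR, ?_⟩,
      Finset.subset_union_right⟩
    rw [Finset.card_union_of_disjoint hd, hS'.2]
    omega
  · intro S hS
    rw [Finset.mem_filter] at hS
    exact Finset.sdiff_union_of_subset hS.2
  · intro S' hS'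
    rw [Finset.mem_powersetCard] at hS'
    have hd : Disjoint S' R := Finset.disjoint_of_subset_left hS'.1 (Finset.sdiff_disjoint)
    rw [Finset.union_sdiff_cancel_right hd]

lemma E_affine (T : Finset ι) (j : ℕ) (x : ι → ℝ) (a b : ℝ) :
    E T j (fun i => a * x i + b)
      = ∑ r ∈ Finset.range (j+1),
          a^r * b^(j-r) * ((T.card - r).choose (j - r) : ℝ) * E T r x := by
  have step1 : E T j (fun i => a * x i + b)
      = ∑ S ∈ T.powersetCard j, ∑ R ∈ S.powerset,
          a^R.card * b^(j - R.card) * ∏ i ∈ R, x i := by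
    rw [E]
    refine Finset.sum_congr rfl fun S hS => ?_
    have hcard : S.card = j := (Finset.mem_powersetCard.1 hS).2
    rw [Finset.prod_add]
    refine Finset.sum_congr rfl fun R hR => ?_
    rw [Finset.mem_powerset] at hR
    rw [Finset.prod_mul_distrib, Finset.prod_const, Finset.prod_const,
      Finset.card_sdiff_of_subset hR, hcard]
    ring
  have step2 : E T j (fun i => a * x i + b)
      = ∑ R ∈ T.powerset,
          ((((T.powersetCard j).filter fun S => R ⊆ S).card : ℝ))
            * (a^R.card * b^(j - R.card) * ∏ i ∈ R, x i) := by
    rw [step1]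
    rw [Finset.sum_comm' (t' := T.powerset)
      (s' := fun R => (T.powersetCard j).filter fun S => R ⊆ S)]
    · refine Finset.sum_congr rfl fun R hR => ?_
      rw [Finset.sum_const, nsmul_eq_mul]
    · intro S R
      constructor
      · rintro ⟨hS, hR⟩
        rw [Finset.mem_powerset] at hR
        rw [Finset.mem_powersetCard] at hS
        exact ⟨Finset.mem_filter.2 ⟨Finset.mem_powersetCard.2 hS, hR⟩,
          Finset.mem_powerset.2 (hR.trans hS.1)⟩
      · rintro ⟨hS, hR⟩
        rw [Finset.mem_filter] at hS
        exact ⟨hS.1, Finset.mem_powerset.2 hS.2⟩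
  -- group by cardinality
  have step3 : E T j (fun i => a * x i + b)
      = ∑ r ∈ Finset.range (T.card + 1), ∑ R ∈ T.powersetCard r,
          ((((T.powersetCard j).filter fun S => R ⊆ S).card : ℝ))
            * (a^R.card * b^(j - R.card) * ∏ i ∈ R, x i) := by
    rw [step2, Finset.sum_powerset]
  -- per-cardinality value
  have hval : ∀ r, r ≤ j → (∑ R ∈ T.powersetCard r,
          ((((T.powersetCard j).filter fun S => R ⊆ S).card : ℝ))
            * (a^R.card * b^(j - R.card) * ∏ i ∈ R, x i))
      = a^r * b^(j-r) * ((T.card - r).choose (j - r) : ℝ) * E T r x := by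
    intro r hr
    rw [E, Finset.mul_sum]
    refine Finset.sum_congr rfl fun R hR => ?_
    rw [Finset.mem_powersetCard] at hR
    rw [card_filter_superset hR.1 (hR.2 ▸ hr), hR.2]
    ring
  have hzero1 : ∀ r, j < r → (∑ R ∈ T.powersetCard r,
          ((((T.powersetCard j).filter fun S => R ⊆ S).card : ℝ))
            * (a^R.card * b^(j - R.card) * ∏ i ∈ R, x i)) = 0 := by
    intro r hrj
    refine Finset.sum_eq_zero fun R hR => ?_
    rw [Finset.mem_powersetCard] at hR
    rw [filter_superset_empty (by omega : j < R.card)]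
    simp
  have hzero2 : ∀ r, T.card < r →
      a^r * b^(j-r) * ((T.card - r).choose (j - r) : ℝ) * E T r x = 0 := by
    intro r hrc
    rw [E_eq_zero_of_card_lt hrc]
    ring
  rw [step3]
  -- both sides equal sum over range (T.card + j + 2)
  have hbig1 : ∑ r ∈ Finset.range (T.card + 1), ∑ R ∈ T.powersetCard r,
          ((((T.powersetCard j).filter fun S => R ⊆ S).card : ℝ))
            * (a^R.card * b^(j - R.card) * ∏ i ∈ R, x i)
      = ∑ r ∈ Finset.range (T.card + j + 2), ∑ R ∈ T.powersetCard r,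
          ((((T.powersetCard j).filter fun S => R ⊆ S).card : ℝ))
            * (a^R.card * b^(j - R.card) * ∏ i ∈ R, x i) := by
    refine (Finset.sum_subset ?_ ?_).symm.symm
    · intro r hr; rw [Finset.mem_range] at hr ⊢; omega
    · intro r hr hr'
      rw [Finset.mem_range] at hr hr'
      refine Finset.sum_eq_zero fun R hR => ?_
      rw [Finset.mem_powersetCard] at hR
      have : T.powersetCard r = ∅ := by
        rw [← Finset.not_nonempty_iff_eq_empty, Finset.powersetCard_nonempty]; omega
      exact absurd (Finset.mem_powersetCard.2 hR) (by rw [this]; exact Finset.notMem_empty R)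
  rw [hbig1]
  have htermwise : ∀ r ∈ Finset.range (T.card + j + 2),
      (∑ R ∈ T.powersetCard r,
          ((((T.powersetCard j).filter fun S => R ⊆ S).card : ℝ))
            * (a^R.card * b^(j - R.card) * ∏ i ∈ R, x i))
      = if r ∈ Finset.range (j+1) then
          a^r * b^(j-r) * ((T.card - r).choose (j - r) : ℝ) * E T r x else 0 := by
    intro r _
    by_cases h : r ∈ Finset.range (j+1)
    · rw [if_pos h]
      exact hval r (by rw [Finset.mem_range] at h; omega)
    · rw [if_neg h]
      exact hzero1 r (by rw [Finset.mem_range] at h; omega)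
  rw [Finset.sum_congr rfl htermwise, Finset.sum_ite_mem]
  have : Finset.range (T.card + j + 2) ∩ Finset.range (j+1) = Finset.range (j+1) := by
    ext r; simp only [Finset.mem_inter, Finset.mem_range]; omega
  rw [this]


lemma E_path_pos {T : Finset ι} {x : ι → ℝ} {m : ℕ} (hm : m ≤ T.card)
    (hx : ∀ i, 1 ≤ i → i ≤ m → 0 < E T i x) {s : ℝ} (hs0 : 0 ≤ s) (hs1 : s ≤ 1)
    {j : ℕ} (hj1 : 1 ≤ j) (hjm : j ≤ m) :
    0 < E T j (fun i => (1 - s) * x i + s) := by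
  rw [E_affine]
  have hnonneg : ∀ r ∈ Finset.range (j+1),
      0 ≤ (1-s)^r * s^(j-r) * ((T.card - r).choose (j - r) : ℝ) * E T r x := by
    intro r hr
    rw [Finset.mem_range] at hr
    have hE : 0 ≤ E T r x := by
      rcases Nat.eq_zero_or_pos r with h | h
      · subst h; simp
      · exact le_of_lt (hx r h (by omega))
    have h1s : (0:ℝ) ≤ 1 - s := by linarith
    exact mul_nonneg (mul_nonneg (mul_nonneg (pow_nonneg h1s r)
      (pow_nonneg hs0 _)) (Nat.cast_nonneg _)) hE
  rcases lt_or_eq_of_le hs1 with h1 | h1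
  · refine Finset.sum_pos' hnonneg ⟨j, Finset.self_mem_range_succ j, ?_⟩
    have hE : 0 < E T j x := hx j hj1 hjm
    have h2 : 0 < (1-s)^j := pow_pos (by linarith) j
    simp only [Nat.sub_self, pow_zero, Nat.choose_zero_right, Nat.cast_one, mul_one]
    exact mul_pos (by nlinarith) hE
  · subst h1
    refine Finset.sum_pos' hnonneg ⟨0, Finset.mem_range.2 (by omega), ?_⟩
    have hc : 0 < ((T.card.choose j : ℕ) : ℝ) := by
      exact_mod_cast Nat.choose_pos (by omega : j ≤ T.card)
    simp only [pow_zero, Nat.sub_zero, E_zero, one_pow, one_mul, mul_one]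
    exact hc

lemma E_cont (V : Finset ι) (r : ℕ) (x : ι → ℝ) :
    Continuous fun s : ℝ => E V r (fun i => (1 - s) * x i + s) := by
  unfold E
  refine continuous_finset_sum _ fun S _ => continuous_finset_prod _ fun i _ => ?_
  fun_prop

lemma erase_gamma : ∀ (m : ℕ) (T : Finset ι) (x : ι → ℝ),
    (∀ i, 1 ≤ i → i ≤ m → 0 < E T i x) → m ≤ T.card → ∀ p ∈ T,
    ∀ i, 1 ≤ i → i ≤ m - 1 → 0 < E (T.erase p) i x := by
  intro m
  induction m with
  | zero => intro T x hx hm p hp i hi1 hi2; omega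
  | succ m ih =>
    intro T x hx hcard p hp i hi1 hi2
    rcases Nat.lt_or_ge i m with him | him
    · exact ih T x (fun i h1 h2 => hx i h1 (by omega)) (by omega) p hp i hi1 (by omega)
    -- i = m
    have him' : i = m := by omega
    rw [him'] at hi1 ⊢
    clear him' hi2 him
    have hm1 : 1 ≤ m := hi1
    by_contra h0
    push_neg at h0
    set U := T.erase p with hU
    have hUcard : U.card = T.card - 1 := Finset.card_erase_of_mem hp
    have hmU : m ≤ U.card := by omega
    set c : ℝ → ι → ℝ := fun s i => (1 - s) * x i + s with hc
    have hc0 : c 0 = x := by funext i; simp [hc]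
    have hc1 : ∀ i, c 1 i = 1 := by intro i; simp [hc]
    set g : ℝ → ℝ := fun s => E U m (c s) with hg
    have hgcont : Continuous g := E_cont U m x
    have hg0 : g 0 ≤ 0 := by rw [hg]; simp only [hc0]; exact h0
    have hg1 : 0 < g 1 := by
      have h1 : E U m (c 1) = (U.card.choose m : ℝ) := E_one' U m (c 1) hc1
      show 0 < E U m (c 1)
      rw [h1]
      exact_mod_cast Nat.choose_pos hmU
    set Z : Set ℝ := {s | s ∈ Set.Icc (0:ℝ) 1 ∧ g s ≤ 0} with hZ
    have hZclosed : IsClosed Z := by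
      have : Z = Set.Icc (0:ℝ) 1 ∩ {s | g s ≤ 0} := rfl
      rw [this]
      exact isClosed_Icc.inter (isClosed_le hgcont continuous_const)
    have hZne : (0:ℝ) ∈ Z := ⟨⟨le_refl 0, zero_le_one⟩, hg0⟩
    have hZbdd : BddAbove Z := ⟨1, fun s hs => hs.1.2⟩
    set t : ℝ := sSup Z with ht
    have htZ : t ∈ Z := hZclosed.csSup_mem ⟨0, hZne⟩ hZbdd
    have ht0 : 0 ≤ t := htZ.1.1
    have ht1 : t ≤ 1 := htZ.1.2
    have hgt : g t ≤ 0 := htZ.2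
    have htlt1 : t < 1 := lt_of_le_of_ne ht1 (fun h => by rw [h] at hgt; linarith)
    have hgpos : ∀ s, t < s → s ≤ 1 → 0 < g s := by
      intro s hts hs1
      by_contra hgs
      push_neg at hgs
      have : s ∈ Z := ⟨⟨by linarith, hs1⟩, hgs⟩
      exact absurd (le_csSup hZbdd this) (by linarith)
    -- right limit : g t ≥ 0
    have hgt0 : g t = 0 := by
      refine le_antisymm hgt ?_
      have htend : Filter.Tendsto g (nhdsWithin t (Set.Ioi t)) (nhds (g t)) :=
        (hgcont.tendsto t).mono_left nhdsWithin_le_nhds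
      refine ge_of_tendsto htend ?_
      filter_upwards [Ioc_mem_nhdsGT htlt1] with s hs
      exact le_of_lt (hgpos s hs.1 hs.2)
    set y : ι → ℝ := c t with hy
    have hyT : ∀ i, 1 ≤ i → i ≤ m + 1 → 0 < E T i y :=
      fun i h1 h2 => E_path_pos hcard hx ht0 ht1 h1 h2
    -- E U (m+1) y > 0
    have hEU : 0 < E U (m+1) y := by
      have := E_erase_succ hp m y
      have hEy : E U m y = 0 := hgt0
      rw [hEy] at this
      have h2 := hyT (m+1) (by omega) (le_refl _)
      rw [this] at h2
      linarith
    -- each second deletion nonneg at y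
    have hq : ∀ q ∈ U, 0 ≤ E (U.erase q) (m-1) y := by
      intro q hq
      rcases Nat.lt_or_ge (m-1) 1 with hm2 | hm2
      · have : m - 1 = 0 := by omega
        rw [this, E_zero]; norm_num
      · -- m ≥ 2; via right limit
        have hhcont : Continuous fun s => E (U.erase q) (m-1) (c s) := E_cont _ _ x
        have htend : Filter.Tendsto (fun s => E (U.erase q) (m-1) (c s))
            (nhdsWithin t (Set.Ioi t)) (nhds (E (U.erase q) (m-1) y)) :=
          (hhcont.tendsto t).mono_left nhdsWithin_le_nhds
        refine ge_of_tendsto htend ?_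
        filter_upwards [Ioc_mem_nhdsGT htlt1] with s hs
        have hsy : ∀ i, 1 ≤ i → i ≤ m → 0 < E T i (c s) :=
          fun i h1 h2 => E_path_pos hcard hx (by linarith [ht0, hs.1]) hs.2 h1 (by omega)
        have hUs : ∀ i, 1 ≤ i → i ≤ m → 0 < E U i (c s) := by
          intro i h1 h2
          rcases Nat.lt_or_ge i m with hi | hi
          · exact ih T (c s) hsy (by omega) p hp i h1 (by omega)
          · have : i = m := by omega
            subst this
            exact hgpos s hs.1 hs.2
        exact le_of_lt (ih U (c s) hUs hmU q hq (m-1) hm2 (by omega))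
    -- contradiction via the identity
    have hid : ∑ q ∈ U, y q * E (U.erase q) m y = (m+1 : ℝ) * E U (m+1) y := by
      have := sum_mul_E_erase U m y
      exact_mod_cast this
    have hEUq : ∀ q ∈ U, E (U.erase q) m y = - (y q * E (U.erase q) (m-1) y) := by
      intro q hqU
      have hsucc : m - 1 + 1 = m := by omega
      have := E_erase_succ hqU (m-1) y
      rw [hsucc] at this
      have hEy : E U m y = 0 := hgt0
      rw [hEy] at this
      linarith
    have hle : ∑ q ∈ U, y q * E (U.erase q) m y ≤ 0 := by
      refine Finset.sum_nonpos fun q hqU => ?_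
      rw [hEUq q hqU]
      have := hq q hqU
      nlinarith [sq_nonneg (y q)]
    rw [hid] at hle
    have hm0 : (0:ℝ) < (m:ℝ) + 1 := by positivity
    nlinarith


lemma exists_pos_subset : ∀ (k : ℕ) (T : Finset ι) (x : ι → ℝ),
    (∀ i, 1 ≤ i → i ≤ k → 0 < E T i x) → k ≤ T.card →
    ∃ V : Finset ι, V ⊆ T ∧ V.card = k ∧ ∀ i ∈ V, 0 < x i := by
  intro k
  induction k with
  | zero => intro T x hx hk; exact ⟨∅, Finset.empty_subset T, rfl, fun i hi => absurd hi (Finset.notMem_empty i)⟩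
  | succ k ih =>
    intro T x hx hk
    have hne : T.Nonempty := Finset.card_pos.1 (by omega)
    obtain ⟨M, hM, hMmax⟩ := Finset.exists_max_image T x hne
    have hxM : 0 < x M := by
      have h1 : 0 < E T 1 x := hx 1 le_rfl (by omega)
      rw [E_single] at h1
      by_contra h
      push_neg at h
      have : ∑ i ∈ T, x i ≤ 0 :=
        Finset.sum_nonpos fun i hi => le_trans (hMmax i hi) h
      linarith
    have hTM : ∀ i, 1 ≤ i → i ≤ k → 0 < E (T.erase M) i x := by
      intro i h1 h2
      exact erase_gamma (k+1) T x hx hk M hM i h1 (by omega)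
    obtain ⟨V', hV'sub, hV'card, hV'pos⟩ :=
      ih (T.erase M) x hTM (by rw [Finset.card_erase_of_mem hM]; omega)
    refine ⟨insert M V', ?_, ?_, ?_⟩
    · exact Finset.insert_subset hM (hV'sub.trans (Finset.erase_subset _ _))
    · rw [Finset.card_insert_of_notMem (fun h => Finset.notMem_erase M T (hV'sub h)), hV'card]
    · intro i hi
      rcases Finset.mem_insert.1 hi with rfl | hi'
      · exact hxM
      · exact hV'pos i hi'

lemma main_aux : ∀ (N : ℕ) (T : Finset ι) (x : ι → ℝ) (k : ℕ), T.card ≤ N → 2 ≤ k →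
    k ≤ T.card → (∀ i, 1 ≤ i → i ≤ k → 0 < E T i x) → ∀ p ∈ T,
    ((T.erase p).filter fun i => x p < x i).card ≤ k - 1 →
    E T k x ≤ ((T.card - k + 1 : ℕ) : ℝ) * (x p * E (T.erase p) (k-1) x) := by
  intro N
  induction N with
  | zero => intro T x k hN hk2 hkT; omega
  | succ N ih =>
    intro T x k hN hk2 hkT hx p hp hcount
    set U := T.erase p with hUdef
    have hUcard : U.card = T.card - 1 := Finset.card_erase_of_mem hp
    have hksucc : k - 1 + 1 = k := by omega
    have hsplit : E T k x = E U k x + x p * E U (k-1) x := by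
      have := E_erase_succ hp (k-1) x
      rw [hksucc] at this
      exact this
    set X : ℝ := x p * E U (k-1) x with hX
    have hTk : 0 < E T k x := hx k (by omega) le_rfl
    rcases eq_or_lt_of_le hkT with heq | hlt
    · -- base : T.card = k
      have hzero : E U k x = 0 := E_eq_zero_of_card_lt (by omega) x
      rw [hsplit, hzero]
      have : T.card - k + 1 = 1 := by omega
      rw [this]
      norm_num
    · by_cases hR : E U k x ≤ 0
      · have hXpos : E T k x ≤ X := by rw [hsplit]; linarith
        have hcoef : (1:ℝ) ≤ ((T.card - k + 1 : ℕ) : ℝ) := by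
          have : 1 ≤ T.card - k + 1 := by omega
          exact_mod_cast this
        nlinarith
      · push_neg at hR
        have hU : ∀ i, 1 ≤ i → i ≤ k → 0 < E U i x := by
          intro i h1 h2
          rcases Nat.lt_or_ge i k with hik | hik
          · exact erase_gamma k T x hx (by omega) p hp i h1 (by omega)
          · have : i = k := by omega
            subst this
            exact hR
        have hUcard' : k ≤ U.card := by omega
        obtain ⟨V, hVsub, hVcard, hVpos⟩ := exists_pos_subset k U x hU hUcard'
        -- choose q
        set B : Finset ι := U.filter (fun i => 0 < x i ∧ x i ≤ x p) with hB
        have hBne : B.Nonempty := by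
          by_contra hBe
          rw [Finset.not_nonempty_iff_eq_empty] at hBe
          -- then V ⊆ filter (x p < x ·)
          have hVA : V ⊆ U.filter (fun i => x p < x i) := by
            intro i hi
            have hiU : i ∈ U := hVsub hi
            have hxi : 0 < x i := hVpos i hi
            rcases le_or_gt (x i) (x p) with h | h
            · have hiB : i ∈ B := Finset.mem_filter.2 ⟨hiU, hxi, h⟩
              rw [hBe] at hiB
              exact absurd hiB (Finset.notMem_empty i)
            · exact Finset.mem_filter.2 ⟨hiU, h⟩
          have := Finset.card_le_card hVA
          omega
        obtain ⟨q, hqB, hqmax⟩ := Finset.exists_max_image B x hBne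
        have hqU : q ∈ U := (Finset.mem_filter.1 hqB).1
        have hxq : 0 < x q := (Finset.mem_filter.1 hqB).2.1
        have hxqp : x q ≤ x p := (Finset.mem_filter.1 hqB).2.2
        have hcount' : ((U.erase q).filter fun i => x q < x i).card ≤ k - 1 := by
          refine le_trans (Finset.card_le_card ?_) hcount
          intro i hi
          rw [Finset.mem_filter] at hi
          have hiU : i ∈ U := Finset.erase_subset _ _ hi.1
          rcases le_or_gt (x i) (x p) with h | h
          · exfalso
            have hiB : i ∈ B := Finset.mem_filter.2 ⟨hiU, lt_trans hxq hi.2, h⟩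
            exact absurd (hqmax i hiB) (not_le.2 hi.2)
          · exact Finset.mem_filter.2 ⟨hiU, h⟩
        -- apply IH to U at q
        have hind := ih U x k (by omega) hk2 hUcard' hU q hqU hcount'
        set Y : ℝ := x q * E (U.erase q) (k-1) x with hY
        have hUq : U.card - k + 1 = T.card - k := by omega
        rw [hUq] at hind
        -- X ≥ x q * E U (k-1) x ≥ Y
        have hEU1 : 0 < E U (k-1) x := hU (k-1) (by omega) (by omega)
        have hXq : x q * E U (k-1) x ≤ X := by
          rw [hX]
          exact mul_le_mul_of_nonneg_right hxqp (le_of_lt hEU1)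
        have hsplitU : E U (k-1) x = E (U.erase q) (k-1) x + x q * E (U.erase q) (k-2) x := by
          have h2 : k - 2 + 1 = k - 1 := by omega
          have := E_erase_succ hqU (k-2) x
          rw [h2] at this
          exact this
        have hE2 : 0 ≤ E (U.erase q) (k-2) x := by
          rcases Nat.lt_or_ge (k-2) 1 with h | h
          · have : k - 2 = 0 := by omega
            rw [this, E_zero]; norm_num
          · exact le_of_lt (erase_gamma k U x hU hUcard' q hqU (k-2) h (by omega))
        have hYq : Y ≤ x q * E U (k-1) x := by
          rw [hY, hsplitU]
          have h9 : 0 ≤ x q * (x q * E (U.erase q) (k-2) x) :=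
            mul_nonneg hxq.le (mul_nonneg hxq.le hE2)
          nlinarith
        have hYX : Y ≤ X := le_trans hYq hXq
        have hXpos : 0 < X := lt_of_lt_of_le (lt_of_lt_of_le (by
          { have : 0 < E (U.erase q) (k-1) x := by
              rcases Nat.lt_or_ge (k-1) 1 with h | h
              · omega
              · exact erase_gamma k U x hU hUcard' q hqU (k-1) h (by omega)
            exact mul_pos hxq this } : (0:ℝ) < Y) hYq) hXq
        -- combine
        have hcast : ((T.card - k + 1 : ℕ) : ℝ) = ((T.card - k : ℕ) : ℝ) + 1 := by
          push_cast
          ring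
        have hnn : (0:ℝ) ≤ ((T.card - k : ℕ) : ℝ) := Nat.cast_nonneg _
        rw [hsplit, hcast]
        calc E U k x + X ≤ ((T.card - k : ℕ) : ℝ) * Y + X := by linarith
          _ ≤ ((T.card - k : ℕ) : ℝ) * X + X := by nlinarith
          _ = (((T.card - k : ℕ) : ℝ) + 1) * X := by ring

end SkDAux

end SkDAuxSection

/-- **Lower bound for `S_k^{jj}`** (Lemma 2.3 (b)): there is `θ = θ(n,k) > 0`
such that for all `α > 0`, all ordered `λ ∈ Γ̃_k` and every index `j ≤ k-1`
(for which `λ_j > 0`), `S_k^{jj}(λ) ≥ θ S_k(λ)/λ_j`. -/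
theorem SkD_lower_bound
    {n k : ℕ} (hk : 2 ≤ k) (hkn : k ≤ n) :
    ∃ θ : ℝ, 0 < θ ∧
      ∀ α : ℝ, 0 < α → ∀ lam ∈ GammaTilde n k α,
        (∀ i j : Fin n, i ≤ j → lam j ≤ lam i) →
        ∀ j : Fin n, (j : ℕ) + 1 ≤ k - 1 → 0 < lam j →
          θ * Sfun α (k : ℤ) lam / lam j ≤ SD α (k : ℤ) lam j := by
  classical
  obtain ⟨k', rfl⟩ : ∃ k', k = k' + 2 := ⟨k - 2, by omega⟩
  set C : ℕ := n + 1 - (k' + 2) + 1 with hC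
  have hC1 : 1 ≤ C := by omega
  have hC0 : (0:ℝ) < (C : ℝ) := by exact_mod_cast hC1
  refine ⟨(C : ℝ)⁻¹, inv_pos.2 hC0, ?_⟩
  intro α hα lam hlam hsort j hj hlamj
  set x : Fin (n+1) → ℝ := Fin.snoc lam α with hxdef
  set p : Fin (n+1) := Fin.castSucc j with hpdef
  have hxc : ∀ i : Fin n, x (Fin.castSucc i) = lam i := fun i => by simp [hxdef]
  have hxl : x (Fin.last n) = α := by simp [hxdef]
  -- translations
  have hTmap : ∀ (Q : Finset (Fin n)) (m : ℕ),
      SkDAux.E (Q.map Fin.castSuccEmb) m x = SkDAux.E Q m lam := by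
    intro Q m
    rw [SkDAux.E_map]
    congr 1
    funext i
    simp only [Function.comp_apply, Fin.coe_castSuccEmb]
    exact hxc i
  have herase : (Finset.univ : Finset (Fin (n+1))).erase (Fin.last n)
      = Finset.univ.map Fin.castSuccEmb := by
    rw [Fin.univ_castSuccEmb]
    exact Finset.erase_cons _
  have hsig : ∀ (Q : Finset (Fin n)) (m : ℕ),
      sigmaOn Q (m : ℤ) lam = SkDAux.E Q m lam := by
    intro Q m
    rw [sigmaOn, if_pos (Int.natCast_nonneg m), Int.toNat_natCast]
    rfl
  have hint1 : ((k' + 2 : ℕ) : ℤ) - 1 = ((k' + 1 : ℕ) : ℤ) := by push_cast; ring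
  have hint2 : ((k' + 2 : ℕ) : ℤ) - 2 = ((k' : ℕ) : ℤ) := by push_cast; ring
  -- splitting at the last coordinate
  have hxsplit : ∀ m : ℕ, SkDAux.E (Finset.univ : Finset (Fin (n+1))) (m+1) x
      = SkDAux.E (Finset.univ : Finset (Fin n)) (m+1) lam
        + α * SkDAux.E (Finset.univ : Finset (Fin n)) m lam := by
    intro m
    rw [SkDAux.E_erase_succ (Finset.mem_univ (Fin.last n)) m x, herase, hTmap, hTmap, hxl]
  have hGamma : lam ∈ GammaCone n (k' + 1) := by
    have := hlam.1
    simpa using this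
  have hEuniv : ∀ m : ℕ, esymmR (m : ℤ) lam = SkDAux.E Finset.univ m lam := fun m =>
    hsig Finset.univ m
  have hSfun : SkDAux.E (Finset.univ : Finset (Fin (n+1))) (k'+2) x
      = Sfun α ((k' + 2 : ℕ) : ℤ) lam := by
    rw [show k' + 2 = (k' + 1) + 1 from rfl, hxsplit (k'+1), Sfun, hint1, hEuniv, hEuniv]
  have hx : ∀ i, 1 ≤ i → i ≤ k' + 2 → 0 < SkDAux.E (Finset.univ : Finset (Fin (n+1))) i x := by
    intro i h1 h2
    obtain ⟨i', rfl⟩ : ∃ i', i = i' + 1 := ⟨i - 1, by omega⟩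
    rcases Nat.lt_or_ge (i' + 1) (k' + 2) with hi | hi
    · rw [hxsplit i']
      have hA : 0 < SkDAux.E (Finset.univ : Finset (Fin n)) (i'+1) lam := by
        rw [← hEuniv]
        exact hGamma (i'+1) (by omega) (by omega)
      have hB : 0 < SkDAux.E (Finset.univ : Finset (Fin n)) i' lam := by
        rcases Nat.eq_zero_or_pos i' with h | h
        · subst h; rw [SkDAux.E_zero]; norm_num
        · rw [← hEuniv]
          exact hGamma i' h (by omega)
      nlinarith
    · have : i' + 1 = k' + 2 := by omega
      rw [this, hSfun]
      exact hlam.2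
  -- counting
  have hcount : ((Finset.univ.erase p).filter fun i => x p < x i).card ≤ (k' + 2) - 1 := by
    have hsubset : ((Finset.univ.erase p).filter fun i => x p < x i)
        ⊆ insert (Fin.last n) ((Finset.Iio j).map Fin.castSuccEmb) := by
      intro i hi
      rw [Finset.mem_filter, Finset.mem_erase] at hi
      by_cases hlast : i = Fin.last n
      · rw [hlast]; exact Finset.mem_insert_self _ _
      · obtain ⟨i', rfl⟩ := Fin.exists_castSucc_eq.2 hlast
        have hxi : x (Fin.castSucc i') = lam i' := hxc i'
        have hxp : x p = lam j := hxc j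
        have hlt : lam j < lam i' := by
          rw [← hxp, ← hxi]; exact hi.2
        have hij : i' < j := by
          by_contra h
          push_neg at h
          exact absurd (hsort j i' h) (not_le.2 hlt)
        exact Finset.mem_insert_of_mem
          (Finset.mem_map.2 ⟨i', Finset.mem_Iio.2 hij, rfl⟩)
    calc ((Finset.univ.erase p).filter fun i => x p < x i).card
        ≤ (insert (Fin.last n) ((Finset.Iio j).map Fin.castSuccEmb)).card :=
          Finset.card_le_card hsubset
      _ ≤ ((Finset.Iio j).map Fin.castSuccEmb).card + 1 := Finset.card_insert_le _ _
      _ = (j : ℕ) + 1 := by rw [Finset.card_map, Fin.card_Iio]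
      _ ≤ (k' + 2) - 1 := hj
  have hcard : (Finset.univ : Finset (Fin (n+1))).card = n + 1 := by
    rw [Finset.card_univ, Fintype.card_fin]
  have hmain := SkDAux.main_aux (n+1) (Finset.univ : Finset (Fin (n+1))) x (k'+2)
    (le_of_eq hcard) (by omega) (by rw [hcard]; omega) hx p (Finset.mem_univ p) hcount
  rw [hcard] at hmain
  -- rewrite right-hand side
  have hlastmem : Fin.last n ∈ (Finset.univ : Finset (Fin (n+1))).erase p := by
    rw [Finset.mem_erase]
    exact ⟨(Fin.castSucc_lt_last j).ne', Finset.mem_univ _⟩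
  have hEE : ((Finset.univ : Finset (Fin (n+1))).erase p).erase (Fin.last n)
      = (Finset.univ.erase j).map Fin.castSuccEmb := by
    have hcomm : ((Finset.univ : Finset (Fin (n+1))).erase p).erase (Fin.last n)
        = ((Finset.univ : Finset (Fin (n+1))).erase (Fin.last n)).erase p := by
      ext a; simp only [Finset.mem_erase]; tauto
    rw [hcomm, herase, show p = Fin.castSuccEmb j from rfl, ← Finset.map_erase]
  have hSD : SkDAux.E ((Finset.univ : Finset (Fin (n+1))).erase p) (k'+1) x
      = SD α ((k' + 2 : ℕ) : ℤ) lam j := by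
    rw [show k' + 1 = k' + 1 from rfl, SkDAux.E_erase_succ hlastmem k' x, hEE, hTmap, hTmap, hxl,
      SD, hint1, hint2, hsig, hsig]
  have h21 : k' + 2 - 1 = k' + 1 := by omega
  rw [h21] at hmain
  rw [hSD, show x p = lam j from hxc j] at hmain
  rw [hSfun] at hmain
  have hCC : ((n + 1 - (k' + 2) + 1 : ℕ) : ℝ) = (C : ℝ) := by rw [hC]
  rw [hCC] at hmain
  -- final algebra
  rw [div_le_iff₀ hlamj]
  calc (C:ℝ)⁻¹ * Sfun α ((k' + 2 : ℕ) : ℤ) lam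
      ≤ (C:ℝ)⁻¹ * ((C:ℝ) * (lam j * SD α ((k' + 2 : ℕ) : ℤ) lam j)) :=
        mul_le_mul_of_nonneg_left hmain (le_of_lt (inv_pos.2 hC0))
    _ = SD α ((k' + 2 : ℕ) : ℤ) lam j * lam j := by
        field_simp
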